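/- Let L be a finite-dimensional Lie algebra over a field F with radical R = R(L). Then E†(L) ⊆ C_L(R). -/

import Mathlib

namespace Paper

open LieAlgebra

section AlgDefs

variable (F : Type*) [Field F] (L : Type*) [LieRing L] [LieAlgebra F L]

/-- The nilradical of a Lie algebra: the largest nilpotent ideal (the sup of nilpotent ideals). -/
noncomputable def nilrad : LieIdeal F L :=
  sSup {I : LieIdeal F L | LieRing.IsNilpotent I}

/-- The nilpotency class of a Lie algebra. -/
noncomputable def nilClass : ℕ := sInf {k | LieModule.lowerCentralSeries F L L k = ⊥}

/-- A Lie algebra is nilregular if the field has characteristic zero, or characteristic `p > 0`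
and its nilradical has nilpotency class less than `p - 1`. -/
noncomputable def Nilregular : Prop :=
  ringChar F = 0 ∨ nilClass F (nilrad F L) < ringChar F - 1

/-- A Lie algebra is solregular if the field has characteristic zero, or characteristic `p > 0`
and its radical has derived length less than `log₂ p`. -/
noncomputable def Solregular : Prop :=
  ringChar F = 0 ∨ 2 ^ LieAlgebra.derivedLength F (LieAlgebra.radical F L) < ringChar F

/-- Regular means nilregular or solregular. -/
noncomputable def Regular : Prop := Nilregular F L ∨ Solregular F L

end AlgDefs

section IdealDefs

variable {F : Type*} [Field F] {L : Type*} [LieRing L] [LieAlgebra F L]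

/-- The centraliser `C_L(I)` of an ideal `I`, as an ideal of `L`. -/
def centralizer (I : LieIdeal F L) : LieIdeal F L where
  carrier := {x : L | ∀ y ∈ I, ⁅x, y⁆ = 0}
  zero_mem' := by intro y hy; simp
  add_mem' := by intro a b ha hb y hy; rw [add_lie, ha y hy, hb y hy, add_zero]
  smul_mem' := by intro c x hx y hy; rw [smul_lie, hx y hy, smul_zero]
  lie_mem := by
    intro x m hm y hy
    have h1 : ⁅x, ⁅m, y⁆⁆ = (0 : L) := by rw [hm y hy, lie_zero]
    have h2 : ⁅m, ⁅x, y⁆⁆ = (0 : L) := hm _ (I.lie_mem hy)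
    show ⁅⁅x, m⁆, y⁆ = (0 : L)
    rw [lie_lie, h1, h2, sub_zero]

/-- The centre `Z(I)` of an ideal `I`, as an ideal of `L`. -/
def idealCenter (I : LieIdeal F L) : LieIdeal F L where
  carrier := {x : L | x ∈ I ∧ ∀ y ∈ I, ⁅x, y⁆ = 0}
  zero_mem' := ⟨I.zero_mem, by intro y hy; simp⟩
  add_mem' := by
    intro a b ha hb
    exact ⟨I.add_mem ha.1 hb.1, fun y hy => by rw [add_lie, ha.2 y hy, hb.2 y hy, add_zero]⟩
  smul_mem' := by
    intro c x hx
    exact ⟨I.smul_mem c hx.1, fun y hy => by rw [smul_lie, hx.2 y hy, smul_zero]⟩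
  lie_mem := by
    intro x m hm
    refine ⟨I.lie_mem hm.1, fun y hy => ?_⟩
    have h1 : ⁅x, ⁅m, y⁆⁆ = (0 : L) := by rw [hm.2 y hy, lie_zero]
    have h2 : ⁅m, ⁅x, y⁆⁆ = (0 : L) := hm.2 _ (I.lie_mem hy)
    show ⁅⁅x, m⁆, y⁆ = (0 : L)
    rw [lie_lie, h1, h2, sub_zero]

/-- The centraliser `C_L(A/B)` of a chief factor, as an ideal of `L`. -/
def chiefCentralizer (A B : LieIdeal F L) : LieIdeal F L where
  carrier := {x : L | ∀ a ∈ A, ⁅x, a⁆ ∈ B}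
  zero_mem' := by intro a ha; simp [B.zero_mem]
  add_mem' := by intro x y hx hy a ha; rw [add_lie]; exact B.add_mem (hx a ha) (hy a ha)
  smul_mem' := by intro c x hx a ha; rw [smul_lie]; exact B.smul_mem c (hx a ha)
  lie_mem := by
    intro x m hm a ha
    show ⁅⁅x, m⁆, a⁆ ∈ B
    rw [lie_lie]
    exact B.sub_mem (B.lie_mem (hm a ha)) (hm _ (A.lie_mem ha))

/-- `A/Z` is a minimal ideal of `L/Z` (via the ideal correspondence). -/
def IsMinModIdeal (Z A : LieIdeal F L) : Prop :=
  Z < A ∧ ∀ B : LieIdeal F L, Z ≤ B → B ≤ A → B = Z ∨ B = A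

/-- `A` is a minimal ideal of `L`. -/
def IsMinimalIdeal (A : LieIdeal F L) : Prop := IsMinModIdeal ⊥ A

/-- An ideal `A` of `L` is quasi-minimal if `A² = A` and `A/Z(A)` is a minimal ideal
of `L/Z(A)`. -/
def IsQuasiMinimal (A : LieIdeal F L) : Prop :=
  ⁅A, A⁆ = A ∧ IsMinModIdeal (idealCenter A) A

end IdealDefs

section MoreDefs

variable (F : Type*) [Field F] (L : Type*) [LieRing L] [LieAlgebra F L]

/-- `E†(L)`: the subalgebra generated by the quasi-minimal components of `L`. -/
noncomputable def Edagger : LieSubalgebra F L :=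
  LieSubalgebra.lieSpan F L (⋃ A ∈ {A : LieIdeal F L | IsQuasiMinimal A}, (A : Set L))

/-- `N†(L) = N(L) + E†(L)`: the quasi-minimal radical of `L`. -/
noncomputable def Ndagger : LieSubalgebra F L :=
  LieIdeal.toLieSubalgebra F L (nilrad F L) ⊔ Edagger F L

/-- The generalised nilradical `N*(L)`: the ideal containing `N = N(L)` with
`N*(L)/N` the sum of all minimal ideals of `L/N` contained in `(N + C_L(N))/N`. -/
noncomputable def Nstar : LieIdeal F L :=
  nilrad F L ⊔ sSup {A : LieIdeal F L | IsMinModIdeal (nilrad F L) A ∧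
    A ≤ nilrad F L ⊔ centralizer (nilrad F L)}

/-- The Frattini ideal: the largest ideal contained in every maximal subalgebra. -/
def frattini : LieIdeal F L :=
  sSup {I : LieIdeal F L | ∀ M : LieSubalgebra F L, IsCoatom M → (I : Set L) ⊆ M}

/-- `Ñ(L)`: the ideal with `Ñ(L)/φ(L) = Soc (L/φ(L))`. -/
noncomputable def Ntilde : LieIdeal F L :=
  frattini F L ⊔ sSup {A : LieIdeal F L | IsMinModIdeal (frattini F L) A}

/-- A characteristic ideal: one invariant under all derivations. -/
def IsCharIdeal (J : LieIdeal F L) : Prop :=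
  ∀ D : LieDerivation F L L, ∀ x ∈ J, D x ∈ J

/-- The characteristic radical `R_c(L)`: the sum of all solvable characteristic ideals. -/
noncomputable def charRadical : LieIdeal F L :=
  sSup {J : LieIdeal F L | LieAlgebra.IsSolvable J ∧ IsCharIdeal F L J}

/-- A subideal: a subalgebra joined to `L` by a chain of successive ideals. -/
def IsSubideal (S : LieSubalgebra F L) : Prop :=
  ∃ n : ℕ, ∃ c : Fin (n + 1) → LieSubalgebra F L,
    c 0 = S ∧ c (Fin.last n) = ⊤ ∧
    ∀ i : Fin n, c i.castSucc ≤ c i.succ ∧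
      ∀ x ∈ c i.succ, ∀ y ∈ c i.castSucc, ⁅x, y⁆ ∈ c i.castSucc

end MoreDefs

section Aux

variable {F : Type*} [Field F] {L : Type*} [LieRing L] [LieAlgebra F L]

lemma mem_idealCenter_iff {A : LieIdeal F L} {x : L} :
    x ∈ idealCenter A ↔ x ∈ A ∧ ∀ y ∈ A, ⁅x, y⁆ = 0 := Iff.rfl

lemma mem_centralizer_iff {I : LieIdeal F L} {x : L} :
    x ∈ centralizer I ↔ ∀ y ∈ I, ⁅x, y⁆ = 0 := Iff.rfl

lemma idealCenter_le (A : LieIdeal F L) : idealCenter A ≤ A := fun _ hx => hx.1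

lemma lie_idealCenter_eq_bot {A : LieIdeal F L} {X Y : LieIdeal F L}
    (hX : X ≤ idealCenter A) (hY : Y ≤ A) : ⁅X, Y⁆ = (⊥ : LieIdeal F L) := by
  rw [eq_bot_iff, LieSubmodule.lieIdeal_oper_eq_span, LieSubmodule.lieSpan_le]
  rintro m ⟨⟨x, hx⟩, ⟨y, hy⟩, h⟩
  have : ⁅x, y⁆ = 0 := (hX hx).2 y (hY hy)
  simp only [← h, this]
  exact (⊥ : LieIdeal F L).zero_mem

lemma quasiMinimal_le_centralizer_radical [FiniteDimensional F L]
    {A : LieIdeal F L} (hA : IsQuasiMinimal A) :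
    A ≤ centralizer (LieAlgebra.radical F L) := by
  obtain ⟨hAA, hZA, hmin⟩ := hA
  set Z := idealCenter A with hZ
  set S := A ⊓ LieAlgebra.radical F L with hS
  have hZleA : Z ≤ A := idealCenter_le A
  rcases hmin (Z ⊔ S) le_sup_left (sup_le hZleA inf_le_left) with hB | hB
  · -- S ≤ Z: brackets with the radical land in the centre of A
    have hSZ : S ≤ Z := le_trans le_sup_right hB.le
    have : ⁅A, A⁆ ≤ centralizer (LieAlgebra.radical F L) := by
      rw [LieSubmodule.lieIdeal_oper_eq_span, LieSubmodule.lieSpan_le]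
      rintro m ⟨⟨a, ha⟩, ⟨b, hb⟩, h⟩
      rw [← h]
      intro r hr
      have hbr : ⁅b, r⁆ ∈ S := by
        refine ⟨?_, (LieAlgebra.radical F L).lie_mem hr⟩
        rw [← lie_skew]
        exact neg_mem (A.lie_mem (x := r) hb)
      have har : ⁅a, r⁆ ∈ S := by
        refine ⟨?_, (LieAlgebra.radical F L).lie_mem hr⟩
        rw [← lie_skew]
        exact neg_mem (A.lie_mem (x := r) ha)
      have h1 : ⁅a, ⁅b, r⁆⁆ = (0 : L) := by
        have := (hSZ hbr).2 a ha
        rw [← neg_eq_zero, lie_skew] at this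
        exact this
      have h2 : ⁅b, ⁅a, r⁆⁆ = (0 : L) := by
        have := (hSZ har).2 b hb
        rw [← neg_eq_zero, lie_skew] at this
        exact this
      show ⁅⁅a, b⁆, r⁆ = (0 : L)
      rw [lie_lie, h1, h2, sub_zero]
    rwa [hAA] at this
  · -- impossible: A would be solvable and perfect
    exfalso
    have hbr1 : ⁅Z, Z ⊔ S⁆ = (⊥ : LieIdeal F L) :=
      lie_idealCenter_eq_bot le_rfl (sup_le hZleA inf_le_left)
    have hAS : A ≤ S := by
      calc A = ⁅Z ⊔ S, Z ⊔ S⁆ := by rw [hB, hAA]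
        _ = ⁅Z, Z ⊔ S⁆ ⊔ ⁅S, Z ⊔ S⁆ := LieSubmodule.sup_lie _ _ _
        _ ≤ S := by
            rw [hbr1, bot_sup_eq]
            exact LieSubmodule.lie_le_left S (Z ⊔ S)
    have hsolv : LieAlgebra.IsSolvable A :=
      (LieIdeal.solvable_iff_le_radical F L A).mpr (le_trans hAS inf_le_right)
    obtain ⟨k, hk⟩ := (LieAlgebra.isSolvable_iff F A).mp hsolv
    rw [LieIdeal.derivedSeries_eq_bot_iff] at hk
    have hDk : ∀ n, LieAlgebra.derivedSeriesOfIdeal F L n A = A := by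
      intro n
      induction n with
      | zero => rfl
      | succ n ih => rw [LieAlgebra.derivedSeriesOfIdeal_succ, ih, hAA]
    rw [hDk k] at hk
    rw [hk] at hZA
    exact (lt_irrefl _ (lt_of_le_of_lt bot_le hZA)).elim

end Aux

/-- `E†(L) ⊆ C_L(R)`. -/
theorem stmt_10 (F : Type*) [Field F] (L : Type*) [LieRing L] [LieAlgebra F L]
    [FiniteDimensional F L] :
    (Edagger F L : Set L) ⊆ (centralizer (LieAlgebra.radical F L) : Set L) := by
  have h : Edagger F L ≤ LieIdeal.toLieSubalgebra F L (centralizer (LieAlgebra.radical F L)) := by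
    rw [Edagger, LieSubalgebra.lieSpan_le]
    rintro x hx
    simp only [Set.mem_iUnion] at hx
    obtain ⟨A, hA, hxA⟩ := hx
    exact quasiMinimal_le_centralizer_radical hA hxA
  exact h

end Paper
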